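/- The converse negation-left rule is admissible in cut-free lTS4: if the sequent Γ ⊢ Δ, ¬α is provable in cut-free lTS4, then α, Γ ⊢ Δ is provable in cut-free lTS4. -/

import Mathlib

inductive Fml : Type
  | var : ℕ → Fml
  | and : Fml → Fml → Fml
  | or  : Fml → Fml → Fml
  | imp : Fml → Fml → Fml
  | neg : Fml → Fml
  | box : Fml → Fml
  | dia : Fml → Fml
  deriving DecidableEq

open Fml

abbrev Ctx := Finset Fml

/-- □Γ -/
def boxS (Γ : Ctx) : Ctx := Γ.image Fml.box
/-- ◇Γ -/
def diaS (Γ : Ctx) : Ctx := Γ.image Fml.dia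
/-- ¬□Γ -/
def nboxS (Γ : Ctx) : Ctx := Γ.image (fun g => Fml.neg (Fml.box g))
/-- ¬◇Γ -/
def ndiaS (Γ : Ctx) : Ctx := Γ.image (fun g => Fml.neg (Fml.dia g))

/-- The twist sequent calculus lTS4; the Boolean index is `true` iff the cut rule is allowed.
    `lTS4 false` is the cut-free fragment. -/
inductive lTS4 : Bool → Ctx → Ctx → Prop
  | initV (c : Bool) (p : ℕ) : lTS4 c {var p} {var p}
  | initNV (c : Bool) (p : ℕ) : lTS4 c {neg (var p)} {neg (var p)}
  | initL (c : Bool) (p : ℕ) : lTS4 c {neg (var p), var p} ∅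
  | initR (c : Bool) (p : ℕ) : lTS4 c ∅ {neg (var p), var p}
  | cut (Γ Δ : Ctx) (α : Fml) :
      lTS4 true Γ {α} → lTS4 true (insert α Γ) Δ → lTS4 true Γ Δ
  | weL (c Γ Δ α) : lTS4 c Γ Δ → lTS4 c (insert α Γ) Δ
  | weR (c Γ Δ α) : lTS4 c Γ Δ → lTS4 c Γ (insert α Δ)
  | andL (c Γ Δ α β) : lTS4 c (insert α (insert β Γ)) Δ → lTS4 c (insert (α.and β) Γ) Δ
  | andR (c Γ Δ α β) : lTS4 c Γ (insert α Δ) → lTS4 c Γ (insert β Δ) →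
      lTS4 c Γ (insert (α.and β) Δ)
  | orL (c Γ Δ α β) : lTS4 c (insert α Γ) Δ → lTS4 c (insert β Γ) Δ →
      lTS4 c (insert (α.or β) Γ) Δ
  | orR (c Γ Δ α β) : lTS4 c Γ (insert α (insert β Δ)) → lTS4 c Γ (insert (α.or β) Δ)
  | impL (c Γ Δ α β) : lTS4 c Γ (insert α Δ) → lTS4 c (insert β Γ) Δ →
      lTS4 c (insert (α.imp β) Γ) Δ
  | impR (c Γ Δ α β) : lTS4 c (insert α Γ) (insert β Δ) → lTS4 c Γ (insert (α.imp β) Δ)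
  | boxL (c Γ Δ α) : lTS4 c (insert α Γ) Δ → lTS4 c (insert α.box Γ) Δ
  | boxR (c Γ₁ Γ₂ Δ₁ Δ₂ α) :
      lTS4 c (boxS Γ₁ ∪ ndiaS Γ₂) (insert α (diaS Δ₁ ∪ nboxS Δ₂)) →
      lTS4 c (boxS Γ₁ ∪ ndiaS Γ₂) (insert α.box (diaS Δ₁ ∪ nboxS Δ₂))
  | diaL (c Γ₁ Γ₂ Δ₁ Δ₂ α) :
      lTS4 c (insert α (boxS Γ₁ ∪ ndiaS Γ₂)) (diaS Δ₁ ∪ nboxS Δ₂) →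
      lTS4 c (insert α.dia (boxS Γ₁ ∪ ndiaS Γ₂)) (diaS Δ₁ ∪ nboxS Δ₂)
  | diaR (c Γ Δ α) : lTS4 c Γ (insert α Δ) → lTS4 c Γ (insert α.dia Δ)
  | nnL (c Γ Δ α) : lTS4 c (insert α Γ) Δ → lTS4 c (insert α.neg.neg Γ) Δ
  | nnR (c Γ Δ α) : lTS4 c Γ (insert α Δ) → lTS4 c Γ (insert α.neg.neg Δ)
  | nandL (c Γ Δ α β) : lTS4 c Γ (insert α Δ) → lTS4 c Γ (insert β Δ) →
      lTS4 c (insert (α.and β).neg Γ) Δ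
  | nandR (c Γ Δ α β) : lTS4 c (insert α (insert β Γ)) Δ → lTS4 c Γ (insert (α.and β).neg Δ)
  | norL (c Γ Δ α β) : lTS4 c Γ (insert α (insert β Δ)) → lTS4 c (insert (α.or β).neg Γ) Δ
  | norR (c Γ Δ α β) : lTS4 c (insert α Γ) Δ → lTS4 c (insert β Γ) Δ →
      lTS4 c Γ (insert (α.or β).neg Δ)
  | nimpL (c Γ Δ α β) : lTS4 c (insert α Γ) (insert β Δ) → lTS4 c (insert (α.imp β).neg Γ) Δ
  | nimpR (c Γ Δ α β) : lTS4 c Γ (insert α Δ) → lTS4 c (insert β Γ) Δ →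
      lTS4 c Γ (insert (α.imp β).neg Δ)
  | nboxL (c Γ₁ Γ₂ Δ₁ Δ₂ α) :
      lTS4 c (boxS Γ₁ ∪ ndiaS Γ₂) (insert α (diaS Δ₁ ∪ nboxS Δ₂)) →
      lTS4 c (insert α.box.neg (boxS Γ₁ ∪ ndiaS Γ₂)) (diaS Δ₁ ∪ nboxS Δ₂)
  | nboxR (c Γ Δ α) : lTS4 c (insert α Γ) Δ → lTS4 c Γ (insert α.box.neg Δ)
  | ndiaL (c Γ Δ α) : lTS4 c Γ (insert α Δ) → lTS4 c (insert α.dia.neg Γ) Δ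
  | ndiaR (c Γ₁ Γ₂ Δ₁ Δ₂ α) :
      lTS4 c (insert α (boxS Γ₁ ∪ ndiaS Γ₂)) (diaS Δ₁ ∪ nboxS Δ₂) →
      lTS4 c (boxS Γ₁ ∪ ndiaS Γ₂) (insert α.dia.neg (diaS Δ₁ ∪ nboxS Δ₂))


/-! ### Auxiliary machinery -/

/-- `negIter n x` is `x` prefixed with `n` negations. -/
def negIter : ℕ → Fml → Fml
  | 0, x => x
  | n+1, x => Fml.neg (negIter n x)

/-- Number of leading negations. -/
def deg : Fml → ℕ
  | Fml.neg a => deg a + 1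
  | Fml.var _ => 0
  | Fml.and _ _ => 0
  | Fml.or _ _ => 0
  | Fml.imp _ _ => 0
  | Fml.box _ => 0
  | Fml.dia _ => 0

/-- Strip all leading negations. -/
def core : Fml → Fml
  | Fml.neg a => core a
  | Fml.var p => Fml.var p
  | Fml.and a b => Fml.and a b
  | Fml.or a b => Fml.or a b
  | Fml.imp a b => Fml.imp a b
  | Fml.box a => Fml.box a
  | Fml.dia a => Fml.dia a

lemma negIter_core_deg : ∀ x : Fml, negIter (deg x) (core x) = x := by
  intro x
  induction x with
  | neg a ih => simp [deg, core, negIter, ih]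
  | var p => rfl
  | and a b iha ihb => rfl
  | or a b iha ihb => rfl
  | imp a b iha ihb => rfl
  | box a ih => rfl
  | dia a ih => rfl

lemma negIter_neg (n : ℕ) (x : Fml) : negIter n x.neg = negIter (n+1) x := by
  induction n with
  | zero => rfl
  | succ n ih => simp [negIter, ih]

/-- `x` (thought of as sitting on the side `A` of a sequent `A ⊢ B` or `B ⊢ A`)
is "represented" in the pair `(A, B)`: some formula with the same core occurs in
`A` with the same negation-parity, or in `B` with opposite parity. -/
def CL (A B : Ctx) (x : Fml) : Prop :=
  (∃ y ∈ A, core y = core x ∧ deg y % 2 = deg x % 2) ∨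
  (∃ y ∈ B, core y = core x ∧ deg y % 2 ≠ deg x % 2)

lemma CL_self {A B : Ctx} {x : Fml} (h : x ∈ A) : CL A B x :=
  Or.inl ⟨x, h, rfl, rfl⟩

lemma CL_mono {A B A' B' : Ctx} {x : Fml} (hA : A ⊆ A') (hB : B ⊆ B')
    (h : CL A B x) : CL A' B' x := by
  rcases h with ⟨y, hy, h1, h2⟩ | ⟨y, hy, h1, h2⟩
  · exact Or.inl ⟨y, hA hy, h1, h2⟩
  · exact Or.inr ⟨y, hB hy, h1, h2⟩

lemma CL_neg {A B : Ctx} {x : Fml} : CL A B x.neg ↔ CL B A x := by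
  constructor <;> rintro (⟨y, hy, h1, h2⟩ | ⟨y, hy, h1, h2⟩)
  · refine Or.inr ⟨y, hy, h1, ?_⟩
    simp only [deg] at h2 ⊢; omega
  · refine Or.inl ⟨y, hy, h1, ?_⟩
    simp only [deg] at h2 ⊢; omega
  · refine Or.inr ⟨y, hy, h1, ?_⟩
    simp only [deg] at h2 ⊢; omega
  · refine Or.inl ⟨y, hy, h1, ?_⟩
    simp only [deg] at h2 ⊢; omega

lemma CL_elim {A B : Ctx} {x : Fml} (hc : core x = x) (hd : deg x = 0)
    (h : CL A B x) :
    (∃ k, negIter (2*k) x ∈ A) ∨ (∃ k, negIter (2*k+1) x ∈ B) := by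
  rcases h with ⟨y, hy, h1, h2⟩ | ⟨y, hy, h1, h2⟩
  · left
    refine ⟨deg y / 2, ?_⟩
    have e : 2 * (deg y / 2) = deg y := by omega
    rw [e, ← hc, ← h1, negIter_core_deg]; exact hy
  · right
    refine ⟨deg y / 2, ?_⟩
    have e : 2 * (deg y / 2) + 1 = deg y := by omega
    rw [e, ← hc, ← h1, negIter_core_deg]; exact hy

/-! ### Weakening -/

lemma weakenL {c : Bool} {Γ Δ : Ctx} (S : Ctx) (h : lTS4 c Γ Δ) :
    lTS4 c (S ∪ Γ) Δ := by
  induction S using Finset.induction_on with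
  | empty => simpa using h
  | insert _ _ ha ih => rw [Finset.insert_union]; exact lTS4.weL _ _ _ _ ih

lemma weakenR {c : Bool} {Γ Δ : Ctx} (S : Ctx) (h : lTS4 c Γ Δ) :
    lTS4 c Γ (S ∪ Δ) := by
  induction S using Finset.induction_on with
  | empty => simpa using h
  | insert _ _ ha ih => rw [Finset.insert_union]; exact lTS4.weR _ _ _ _ ih

lemma weaken {c : Bool} {Γ Δ Γ' Δ' : Ctx} (h : lTS4 c Γ Δ)
    (hΓ : Γ ⊆ Γ') (hΔ : Δ ⊆ Δ') : lTS4 c Γ' Δ' := by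
  have h1 := weakenR Δ' (weakenL Γ' h)
  rwa [Finset.union_eq_left.mpr hΓ, Finset.union_eq_left.mpr hΔ] at h1

/-! ### Iterated double negation -/

lemma nnLiter {c : Bool} {Γ Δ : Ctx} {x : Fml} (k : ℕ)
    (h : lTS4 c (insert x Γ) Δ) : lTS4 c (insert (negIter (2*k) x) Γ) Δ := by
  induction k with
  | zero => simpa [negIter] using h
  | succ n ih =>
      have e : 2*(n+1) = (2*n) + 1 + 1 := by omega
      rw [e]
      exact lTS4.nnL _ _ _ _ ih

lemma nnRiter {c : Bool} {Γ Δ : Ctx} {x : Fml} (k : ℕ)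
    (h : lTS4 c Γ (insert x Δ)) : lTS4 c Γ (insert (negIter (2*k) x) Δ) := by
  induction k with
  | zero => simpa [negIter] using h
  | succ n ih =>
      have e : 2*(n+1) = (2*n) + 1 + 1 := by omega
      rw [e]
      exact lTS4.nnR _ _ _ _ ih

lemma absorbL {c : Bool} {Γ' Δ' : Ctx} {x : Fml}
    (hw : ∃ k, negIter (2*k) x ∈ Γ') (h : lTS4 c (insert x Γ') Δ') :
    lTS4 c Γ' Δ' := by
  obtain ⟨k, hk⟩ := hw
  have h1 := nnLiter k h
  rwa [Finset.insert_eq_self.mpr hk] at h1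

lemma absorbR {c : Bool} {Γ' Δ' : Ctx} {x : Fml}
    (hw : ∃ k, negIter (2*k) x ∈ Δ') (h : lTS4 c Γ' (insert x Δ')) :
    lTS4 c Γ' Δ' := by
  obtain ⟨k, hk⟩ := hw
  have h1 := nnRiter k h
  rwa [Finset.insert_eq_self.mpr hk] at h1

/-! ### Transfer -/

lemma transferL {c : Bool} {X Γ' Δ' : Ctx} (h : lTS4 c X Δ')
    (hw : ∀ x ∈ X, ∃ k, negIter (2*k) x ∈ Γ') : lTS4 c Γ' Δ' := by
  have base : lTS4 c (X ∪ Γ') Δ' := weaken h Finset.subset_union_left (le_refl _)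
  clear h
  induction X using Finset.induction_on with
  | empty => simpa using base
  | @insert a s ha ih =>
      rw [Finset.insert_union] at base
      have h2 := absorbL (x := a) (Γ' := s ∪ Γ') ?_ base
      · exact ih (fun x hx => hw x (Finset.mem_insert_of_mem hx)) h2
      · obtain ⟨k, hk⟩ := hw a (Finset.mem_insert_self _ _)
        exact ⟨k, Finset.mem_union_right _ hk⟩

lemma transferR {c : Bool} {Y Γ' Δ' : Ctx} (h : lTS4 c Γ' Y)
    (hw : ∀ x ∈ Y, ∃ k, negIter (2*k) x ∈ Δ') : lTS4 c Γ' Δ' := by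
  have base : lTS4 c Γ' (Y ∪ Δ') := weaken h (le_refl _) Finset.subset_union_left
  clear h
  induction Y using Finset.induction_on with
  | empty => simpa using base
  | @insert a s ha ih =>
      rw [Finset.insert_union] at base
      have h2 := absorbR (x := a) (Δ' := s ∪ Δ') ?_ base
      · exact ih (fun x hx => hw x (Finset.mem_insert_of_mem hx)) h2
      · obtain ⟨k, hk⟩ := hw a (Finset.mem_insert_self _ _)
        exact ⟨k, Finset.mem_union_right _ hk⟩

/-! ### Generalized initial sequents -/

lemma initAll {c : Bool} {Γ' Δ' : Ctx} {p : ℕ}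
    (h1 : CL Γ' Δ' (Fml.var p)) (h2 : CL Δ' Γ' (Fml.var p)) :
    lTS4 c Γ' Δ' := by
  rcases CL_elim (x := Fml.var p) rfl rfl h1 with ⟨a, ha⟩ | ⟨a, ha⟩ <;>
    rcases CL_elim (x := Fml.var p) rfl rfl h2 with ⟨b, hb⟩ | ⟨b, hb⟩
  · -- even in Γ', even in Δ'
    have d0 : lTS4 c {Fml.var p} {Fml.var p} := lTS4.initV c p
    have d1 : lTS4 c (insert (negIter (2*a) (Fml.var p)) (∅ : Ctx)) {Fml.var p} :=
      nnLiter a (by simpa using d0)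
    have d2 : lTS4 c (insert (negIter (2*a) (Fml.var p)) (∅ : Ctx))
        (insert (negIter (2*b) (Fml.var p)) (∅ : Ctx)) :=
      nnRiter b (by simpa using d1)
    refine weaken d2 ?_ ?_ <;>
      · intro z hz
        simp only [Finset.mem_insert, Finset.notMem_empty, or_false] at hz
        subst hz; assumption
  · -- even in Γ', odd in Γ'
    have d0 : lTS4 c {Fml.neg (Fml.var p), Fml.var p} (∅ : Ctx) := lTS4.initL c p
    have d1 : lTS4 c (insert (negIter (2*b) (Fml.neg (Fml.var p))) {Fml.var p}) (∅ : Ctx) :=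
      nnLiter b d0
    rw [negIter_neg] at d1
    have d1' : lTS4 c (insert (Fml.var p) {negIter (2*b+1) (Fml.var p)}) (∅ : Ctx) := by
      have e : (insert (negIter (2*b+1) (Fml.var p)) {Fml.var p} : Ctx)
          = insert (Fml.var p) {negIter (2*b+1) (Fml.var p)} := Finset.pair_comm _ _
      rwa [e] at d1
    have d2 := nnLiter a d1'
    refine weaken d2 ?_ (Finset.empty_subset _)
    intro z hz
    simp only [Finset.mem_insert, Finset.mem_singleton] at hz
    rcases hz with rfl | rfl <;> assumption
  · -- odd in Δ', even in Δ'
    have d0 : lTS4 c (∅ : Ctx) {Fml.neg (Fml.var p), Fml.var p} := lTS4.initR c p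
    have d1 : lTS4 c (∅ : Ctx) (insert (negIter (2*a) (Fml.neg (Fml.var p))) {Fml.var p}) :=
      nnRiter a d0
    rw [negIter_neg] at d1
    have d1' : lTS4 c (∅ : Ctx) (insert (Fml.var p) {negIter (2*a+1) (Fml.var p)}) := by
      have e : (insert (negIter (2*a+1) (Fml.var p)) {Fml.var p} : Ctx)
          = insert (Fml.var p) {negIter (2*a+1) (Fml.var p)} := Finset.pair_comm _ _
      rwa [e] at d1
    have d2 := nnRiter b d1'
    refine weaken d2 (Finset.empty_subset _) ?_
    intro z hz
    simp only [Finset.mem_insert, Finset.mem_singleton] at hz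
    rcases hz with rfl | rfl <;> assumption
  · -- odd in Δ', odd in Γ'
    have d0 : lTS4 c {Fml.neg (Fml.var p)} {Fml.neg (Fml.var p)} := lTS4.initNV c p
    have d1 : lTS4 c (insert (negIter (2*b) (Fml.neg (Fml.var p))) (∅ : Ctx))
        {Fml.neg (Fml.var p)} := nnLiter b (by simpa using d0)
    have d2 : lTS4 c (insert (negIter (2*b) (Fml.neg (Fml.var p))) (∅ : Ctx))
        (insert (negIter (2*a) (Fml.neg (Fml.var p))) (∅ : Ctx)) :=
      nnRiter a (by simpa using d1)
    rw [negIter_neg] at d2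
    refine weaken d2 ?_ ?_ <;>
      · intro z hz
        simp only [Finset.mem_insert, Finset.notMem_empty, or_false] at hz
        subst hz
        first
          | assumption
          | (rw [negIter_neg]; assumption)

/-! ### Modal context realignment -/

lemma modalCore {Γ₁ Γ₂ Δ₁ Δ₂ Γ' Δ' : Ctx}
    (hG : ∀ x ∈ boxS Γ₁ ∪ ndiaS Γ₂, CL Γ' Δ' x)
    (hD : ∀ x ∈ diaS Δ₁ ∪ nboxS Δ₂, CL Δ' Γ' x) :
    ∃ A B E F : Ctx,
      (∀ x ∈ boxS Γ₁ ∪ ndiaS Γ₂, CL (boxS A ∪ ndiaS B) (diaS E ∪ nboxS F) x) ∧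
      (∀ x ∈ diaS Δ₁ ∪ nboxS Δ₂, CL (diaS E ∪ nboxS F) (boxS A ∪ ndiaS B) x) ∧
      (∀ x ∈ boxS A ∪ ndiaS B, ∃ k, negIter (2*k) x ∈ Γ') ∧
      (∀ x ∈ diaS E ∪ nboxS F, ∃ k, negIter (2*k) x ∈ Δ') := by
  classical
  refine ⟨(Γ₁ ∪ Δ₂).filter (fun g => ∃ y ∈ Γ', core y = Fml.box g ∧ deg y % 2 = 0),
          (Γ₂ ∪ Δ₁).filter (fun g => ∃ y ∈ Γ', core y = Fml.dia g ∧ deg y % 2 = 1),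
          (Δ₁ ∪ Γ₂).filter (fun g => ∃ y ∈ Δ', core y = Fml.dia g ∧ deg y % 2 = 0),
          (Δ₂ ∪ Γ₁).filter (fun g => ∃ y ∈ Δ', core y = Fml.box g ∧ deg y % 2 = 1),
          ?_, ?_, ?_, ?_⟩
  · intro x hx
    have hx' := hG x hx
    simp only [boxS, ndiaS, Finset.mem_union, Finset.mem_image] at hx
    rcases hx with ⟨g, hg, rfl⟩ | ⟨g, hg, rfl⟩
    · rcases hx' with ⟨y, hy, hc, hd⟩ | ⟨y, hy, hc, hd⟩
      · simp only [core, deg] at hc hd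
        refine Or.inl ⟨Fml.box g, ?_, rfl, rfl⟩
        simp only [boxS, Finset.mem_union, Finset.mem_image, Finset.mem_filter]
        exact Or.inl ⟨g, ⟨Or.inl hg, y, hy, hc, hd⟩, rfl⟩
      · simp only [core, deg] at hc hd
        refine Or.inr ⟨Fml.neg (Fml.box g), ?_, rfl, by simp [deg]⟩
        simp only [nboxS, Finset.mem_union, Finset.mem_image, Finset.mem_filter]
        exact Or.inr ⟨g, ⟨Or.inr hg, y, hy, hc, by omega⟩, rfl⟩
    · rcases hx' with ⟨y, hy, hc, hd⟩ | ⟨y, hy, hc, hd⟩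
      · simp only [core, deg] at hc hd
        refine Or.inl ⟨Fml.neg (Fml.dia g), ?_, rfl, rfl⟩
        simp only [ndiaS, Finset.mem_union, Finset.mem_image, Finset.mem_filter]
        exact Or.inr ⟨g, ⟨Or.inl hg, y, hy, hc, hd⟩, rfl⟩
      · simp only [core, deg] at hc hd
        refine Or.inr ⟨Fml.dia g, ?_, rfl, by simp [deg]⟩
        simp only [diaS, Finset.mem_union, Finset.mem_image, Finset.mem_filter]
        exact Or.inl ⟨g, ⟨Or.inr hg, y, hy, hc, by omega⟩, rfl⟩
  · intro x hx
    have hx' := hD x hx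
    simp only [diaS, nboxS, Finset.mem_union, Finset.mem_image] at hx
    rcases hx with ⟨d, hd0, rfl⟩ | ⟨d, hd0, rfl⟩
    · rcases hx' with ⟨y, hy, hc, hd⟩ | ⟨y, hy, hc, hd⟩
      · simp only [core, deg] at hc hd
        refine Or.inl ⟨Fml.dia d, ?_, rfl, rfl⟩
        simp only [diaS, Finset.mem_union, Finset.mem_image, Finset.mem_filter]
        exact Or.inl ⟨d, ⟨Or.inl hd0, y, hy, hc, hd⟩, rfl⟩
      · simp only [core, deg] at hc hd
        refine Or.inr ⟨Fml.neg (Fml.dia d), ?_, rfl, by simp [deg]⟩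
        simp only [ndiaS, Finset.mem_union, Finset.mem_image, Finset.mem_filter]
        exact Or.inr ⟨d, ⟨Or.inr hd0, y, hy, hc, by omega⟩, rfl⟩
    · rcases hx' with ⟨y, hy, hc, hd⟩ | ⟨y, hy, hc, hd⟩
      · simp only [core, deg] at hc hd
        refine Or.inl ⟨Fml.neg (Fml.box d), ?_, rfl, rfl⟩
        simp only [nboxS, Finset.mem_union, Finset.mem_image, Finset.mem_filter]
        exact Or.inr ⟨d, ⟨Or.inl hd0, y, hy, hc, hd⟩, rfl⟩
      · simp only [core, deg] at hc hd
        refine Or.inr ⟨Fml.box d, ?_, rfl, by simp [deg]⟩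
        simp only [boxS, Finset.mem_union, Finset.mem_image, Finset.mem_filter]
        exact Or.inl ⟨d, ⟨Or.inr hd0, y, hy, hc, by omega⟩, rfl⟩
  · intro x hx
    simp only [boxS, ndiaS, Finset.mem_union, Finset.mem_image, Finset.mem_filter] at hx
    rcases hx with ⟨a, ⟨_, y, hy, hc, hd⟩, rfl⟩ | ⟨b, ⟨_, y, hy, hc, hd⟩, rfl⟩
    · refine ⟨deg y / 2, ?_⟩
      have e : 2 * (deg y / 2) = deg y := by omega
      rw [e, ← hc, negIter_core_deg]; exact hy
    · refine ⟨deg y / 2, ?_⟩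
      rw [negIter_neg]
      have e : 2 * (deg y / 2) + 1 = deg y := by omega
      rw [e, ← hc, negIter_core_deg]; exact hy
  · intro x hx
    simp only [diaS, nboxS, Finset.mem_union, Finset.mem_image, Finset.mem_filter] at hx
    rcases hx with ⟨a, ⟨_, y, hy, hc, hd⟩, rfl⟩ | ⟨b, ⟨_, y, hy, hc, hd⟩, rfl⟩
    · refine ⟨deg y / 2, ?_⟩
      have e : 2 * (deg y / 2) = deg y := by omega
      rw [e, ← hc, negIter_core_deg]; exact hy
    · refine ⟨deg y / 2, ?_⟩
      rw [negIter_neg]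
      have e : 2 * (deg y / 2) + 1 = deg y := by omega
      rw [e, ← hc, negIter_core_deg]; exact hy

lemma modalR {c : Bool} {Γ₁ Γ₂ Δ₁ Δ₂ Γ' Δ' : Ctx} {γ : Fml}
    (ih : ∀ X Y : Ctx, (∀ x ∈ boxS Γ₁ ∪ ndiaS Γ₂, CL X Y x) →
      (∀ x ∈ insert γ (diaS Δ₁ ∪ nboxS Δ₂), CL Y X x) → lTS4 c X Y)
    (hG : ∀ x ∈ boxS Γ₁ ∪ ndiaS Γ₂, CL Γ' Δ' x)
    (hD : ∀ x ∈ diaS Δ₁ ∪ nboxS Δ₂, CL Δ' Γ' x)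
    (hγ : CL Δ' Γ' (Fml.box γ)) : lTS4 c Γ' Δ' := by
  obtain ⟨A, B, E, F, h1, h2, w1, w2⟩ := modalCore hG hD
  have hprem : lTS4 c (boxS A ∪ ndiaS B) (insert γ (diaS E ∪ nboxS F)) := by
    apply ih
    · exact fun x hx => CL_mono (le_refl _) (Finset.subset_insert _ _) (h1 x hx)
    · intro x hx
      rcases Finset.mem_insert.1 hx with rfl | hx
      · exact CL_self (Finset.mem_insert_self _ _)
      · exact CL_mono (Finset.subset_insert _ _) (le_refl _) (h2 x hx)
  rcases CL_elim (x := Fml.box γ) rfl rfl hγ with ⟨k, hk⟩ | ⟨k, hk⟩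
  · have hd := lTS4.boxR c A B E F γ hprem
    refine transferR (transferL hd w1) ?_
    intro x hx
    rcases Finset.mem_insert.1 hx with rfl | hx
    · exact ⟨k, hk⟩
    · exact w2 x hx
  · have hd := lTS4.nboxL c A B E F γ hprem
    refine transferR (transferL hd ?_) w2
    intro x hx
    rcases Finset.mem_insert.1 hx with rfl | hx
    · exact ⟨k, by rw [negIter_neg]; exact hk⟩
    · exact w1 x hx

lemma modalL {c : Bool} {Γ₁ Γ₂ Δ₁ Δ₂ Γ' Δ' : Ctx} {γ : Fml}
    (ih : ∀ X Y : Ctx, (∀ x ∈ insert γ (boxS Γ₁ ∪ ndiaS Γ₂), CL X Y x) →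
      (∀ x ∈ diaS Δ₁ ∪ nboxS Δ₂, CL Y X x) → lTS4 c X Y)
    (hG : ∀ x ∈ boxS Γ₁ ∪ ndiaS Γ₂, CL Γ' Δ' x)
    (hD : ∀ x ∈ diaS Δ₁ ∪ nboxS Δ₂, CL Δ' Γ' x)
    (hγ : CL Γ' Δ' (Fml.dia γ)) : lTS4 c Γ' Δ' := by
  obtain ⟨A, B, E, F, h1, h2, w1, w2⟩ := modalCore hG hD
  have hprem : lTS4 c (insert γ (boxS A ∪ ndiaS B)) (diaS E ∪ nboxS F) := by
    apply ih
    · intro x hx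
      rcases Finset.mem_insert.1 hx with rfl | hx
      · exact CL_self (Finset.mem_insert_self _ _)
      · exact CL_mono (Finset.subset_insert _ _) (le_refl _) (h1 x hx)
    · exact fun x hx => CL_mono (le_refl _) (Finset.subset_insert _ _) (h2 x hx)
  rcases CL_elim (x := Fml.dia γ) rfl rfl hγ with ⟨k, hk⟩ | ⟨k, hk⟩
  · have hd := lTS4.diaL c A B E F γ hprem
    refine transferR (transferL hd ?_) w2
    intro x hx
    rcases Finset.mem_insert.1 hx with rfl | hx
    · exact ⟨k, hk⟩
    · exact w1 x hx
  · have hd := lTS4.ndiaR c A B E F γ hprem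
    refine transferR (transferL hd w1) ?_
    intro x hx
    rcases Finset.mem_insert.1 hx with rfl | hx
    · exact ⟨k, by rw [negIter_neg]; exact hk⟩
    · exact w2 x hx

/-! ### The main lemma -/

lemma conds_tail {S : Ctx} {a : Fml} {P : Fml → Prop}
    (h : ∀ x ∈ insert a S, P x) : ∀ x ∈ S, P x :=
  fun x hx => h x (Finset.mem_insert_of_mem hx)

lemma conds_cons {X Y S : Ctx} {a : Fml} (ha : CL X Y a)
    (h : ∀ x ∈ S, CL X Y x) : ∀ x ∈ insert a S, CL X Y x := by
  intro x hx
  rcases Finset.mem_insert.1 hx with rfl | hx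
  exacts [ha, h x hx]

lemma conds_weak {A B X Y S : Ctx} (hX : A ⊆ X) (hY : B ⊆ Y)
    (h : ∀ x ∈ S, CL A B x) : ∀ x ∈ S, CL X Y x :=
  fun x hx => CL_mono hX hY (h x hx)

lemma sub2 {Γ' : Ctx} {a b : Fml} : Γ' ⊆ insert a (insert b Γ') :=
  Finset.Subset.trans (Finset.subset_insert _ _) (Finset.subset_insert _ _)

lemma main {c : Bool} {Γ Δ : Ctx} (h : lTS4 c Γ Δ) : c = false →
    ∀ Γ' Δ', (∀ x ∈ Γ, CL Γ' Δ' x) → (∀ x ∈ Δ, CL Δ' Γ' x) → lTS4 false Γ' Δ' := by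
  induction h with
  | initV c p =>
      intro hc Γ' Δ' hL hR
      exact initAll (hL _ (Finset.mem_singleton_self _)) (hR _ (Finset.mem_singleton_self _))
  | initNV c p =>
      intro hc Γ' Δ' hL hR
      exact initAll (CL_neg.mp (hR _ (Finset.mem_singleton_self _)))
        (CL_neg.mp (hL _ (Finset.mem_singleton_self _)))
  | initL c p =>
      intro hc Γ' Δ' hL hR
      exact initAll (hL _ (Finset.mem_insert_of_mem (Finset.mem_singleton_self _)))
        (CL_neg.mp (hL _ (Finset.mem_insert_self _ _)))
  | initR c p =>
      intro hc Γ' Δ' hL hR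
      exact initAll (CL_neg.mp (hR _ (Finset.mem_insert_self _ _)))
        (hR _ (Finset.mem_insert_of_mem (Finset.mem_singleton_self _)))
  | cut Γ Δ a h1 h2 ih1 ih2 =>
      exact fun hc => Bool.noConfusion hc
  | weL c Γ Δ a h ih =>
      intro hc Γ' Δ' hL hR
      exact ih hc Γ' Δ' (conds_tail hL) hR
  | weR c Γ Δ a h ih =>
      intro hc Γ' Δ' hL hR
      exact ih hc Γ' Δ' hL (conds_tail hR)
  | andL c Γ Δ a b h ih =>
      intro hc Γ' Δ' hL hR
      have key : lTS4 false (insert a (insert b Γ')) Δ' :=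
        ih hc _ _ (conds_cons (CL_self (Finset.mem_insert_self _ _))
            (conds_cons (CL_self (Finset.mem_insert_of_mem (Finset.mem_insert_self _ _)))
              (conds_weak sub2 (Finset.Subset.refl _) (conds_tail hL))))
          (conds_weak (Finset.Subset.refl _) sub2 hR)
      rcases CL_elim (x := Fml.and a b) rfl rfl (hL _ (Finset.mem_insert_self _ _)) with
        ⟨k, hk⟩ | ⟨k, hk⟩
      · exact absorbL ⟨k, hk⟩ (lTS4.andL _ _ _ _ _ key)
      · exact absorbR ⟨k, by rw [negIter_neg]; exact hk⟩ (lTS4.nandR _ _ _ _ _ key)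
  | andR c Γ Δ a b h1 h2 ih1 ih2 =>
      intro hc Γ' Δ' hL hR
      have key1 : lTS4 false Γ' (insert a Δ') :=
        ih1 hc _ _ (conds_weak (Finset.Subset.refl _) (Finset.subset_insert _ _) hL)
          (conds_cons (CL_self (Finset.mem_insert_self _ _))
            (conds_weak (Finset.subset_insert _ _) (Finset.Subset.refl _) (conds_tail hR)))
      have key2 : lTS4 false Γ' (insert b Δ') :=
        ih2 hc _ _ (conds_weak (Finset.Subset.refl _) (Finset.subset_insert _ _) hL)
          (conds_cons (CL_self (Finset.mem_insert_self _ _))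
            (conds_weak (Finset.subset_insert _ _) (Finset.Subset.refl _) (conds_tail hR)))
      rcases CL_elim (x := Fml.and a b) rfl rfl (hR _ (Finset.mem_insert_self _ _)) with
        ⟨k, hk⟩ | ⟨k, hk⟩
      · exact absorbR ⟨k, hk⟩ (lTS4.andR _ _ _ _ _ key1 key2)
      · exact absorbL ⟨k, by rw [negIter_neg]; exact hk⟩ (lTS4.nandL _ _ _ _ _ key1 key2)
  | orL c Γ Δ a b h1 h2 ih1 ih2 =>
      intro hc Γ' Δ' hL hR
      have key1 : lTS4 false (insert a Γ') Δ' :=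
        ih1 hc _ _ (conds_cons (CL_self (Finset.mem_insert_self _ _))
            (conds_weak (Finset.subset_insert _ _) (Finset.Subset.refl _) (conds_tail hL)))
          (conds_weak (Finset.Subset.refl _) (Finset.subset_insert _ _) hR)
      have key2 : lTS4 false (insert b Γ') Δ' :=
        ih2 hc _ _ (conds_cons (CL_self (Finset.mem_insert_self _ _))
            (conds_weak (Finset.subset_insert _ _) (Finset.Subset.refl _) (conds_tail hL)))
          (conds_weak (Finset.Subset.refl _) (Finset.subset_insert _ _) hR)
      rcases CL_elim (x := Fml.or a b) rfl rfl (hL _ (Finset.mem_insert_self _ _)) with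
        ⟨k, hk⟩ | ⟨k, hk⟩
      · exact absorbL ⟨k, hk⟩ (lTS4.orL _ _ _ _ _ key1 key2)
      · exact absorbR ⟨k, by rw [negIter_neg]; exact hk⟩ (lTS4.norR _ _ _ _ _ key1 key2)
  | orR c Γ Δ a b h ih =>
      intro hc Γ' Δ' hL hR
      have key : lTS4 false Γ' (insert a (insert b Δ')) :=
        ih hc _ _ (conds_weak (Finset.Subset.refl _) sub2 hL)
          (conds_cons (CL_self (Finset.mem_insert_self _ _))
            (conds_cons (CL_self (Finset.mem_insert_of_mem (Finset.mem_insert_self _ _)))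
              (conds_weak sub2 (Finset.Subset.refl _) (conds_tail hR))))
      rcases CL_elim (x := Fml.or a b) rfl rfl (hR _ (Finset.mem_insert_self _ _)) with
        ⟨k, hk⟩ | ⟨k, hk⟩
      · exact absorbR ⟨k, hk⟩ (lTS4.orR _ _ _ _ _ key)
      · exact absorbL ⟨k, by rw [negIter_neg]; exact hk⟩ (lTS4.norL _ _ _ _ _ key)
  | impL c Γ Δ a b h1 h2 ih1 ih2 =>
      intro hc Γ' Δ' hL hR
      have key1 : lTS4 false Γ' (insert a Δ') :=
        ih1 hc _ _ (conds_weak (Finset.Subset.refl _) (Finset.subset_insert _ _) (conds_tail hL))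
          (conds_cons (CL_self (Finset.mem_insert_self _ _))
            (conds_weak (Finset.subset_insert _ _) (Finset.Subset.refl _) hR))
      have key2 : lTS4 false (insert b Γ') Δ' :=
        ih2 hc _ _ (conds_cons (CL_self (Finset.mem_insert_self _ _))
            (conds_weak (Finset.subset_insert _ _) (Finset.Subset.refl _) (conds_tail hL)))
          (conds_weak (Finset.Subset.refl _) (Finset.subset_insert _ _) hR)
      rcases CL_elim (x := Fml.imp a b) rfl rfl (hL _ (Finset.mem_insert_self _ _)) with
        ⟨k, hk⟩ | ⟨k, hk⟩
      · exact absorbL ⟨k, hk⟩ (lTS4.impL _ _ _ _ _ key1 key2)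
      · exact absorbR ⟨k, by rw [negIter_neg]; exact hk⟩ (lTS4.nimpR _ _ _ _ _ key1 key2)
  | impR c Γ Δ a b h ih =>
      intro hc Γ' Δ' hL hR
      have key : lTS4 false (insert a Γ') (insert b Δ') :=
        ih hc _ _ (conds_cons (CL_self (Finset.mem_insert_self _ _))
            (conds_weak (Finset.subset_insert _ _) (Finset.subset_insert _ _) hL))
          (conds_cons (CL_self (Finset.mem_insert_self _ _))
            (conds_weak (Finset.subset_insert _ _) (Finset.subset_insert _ _) (conds_tail hR)))
      rcases CL_elim (x := Fml.imp a b) rfl rfl (hR _ (Finset.mem_insert_self _ _)) with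
        ⟨k, hk⟩ | ⟨k, hk⟩
      · exact absorbR ⟨k, hk⟩ (lTS4.impR _ _ _ _ _ key)
      · exact absorbL ⟨k, by rw [negIter_neg]; exact hk⟩ (lTS4.nimpL _ _ _ _ _ key)
  | boxL c Γ Δ a h ih =>
      intro hc Γ' Δ' hL hR
      have key : lTS4 false (insert a Γ') Δ' :=
        ih hc _ _ (conds_cons (CL_self (Finset.mem_insert_self _ _))
            (conds_weak (Finset.subset_insert _ _) (Finset.Subset.refl _) (conds_tail hL)))
          (conds_weak (Finset.Subset.refl _) (Finset.subset_insert _ _) hR)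
      rcases CL_elim (x := Fml.box a) rfl rfl (hL _ (Finset.mem_insert_self _ _)) with
        ⟨k, hk⟩ | ⟨k, hk⟩
      · exact absorbL ⟨k, hk⟩ (lTS4.boxL _ _ _ _ key)
      · exact absorbR ⟨k, by rw [negIter_neg]; exact hk⟩ (lTS4.nboxR _ _ _ _ key)
  | diaR c Γ Δ a h ih =>
      intro hc Γ' Δ' hL hR
      have key : lTS4 false Γ' (insert a Δ') :=
        ih hc _ _ (conds_weak (Finset.Subset.refl _) (Finset.subset_insert _ _) hL)
          (conds_cons (CL_self (Finset.mem_insert_self _ _))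
            (conds_weak (Finset.subset_insert _ _) (Finset.Subset.refl _) (conds_tail hR)))
      rcases CL_elim (x := Fml.dia a) rfl rfl (hR _ (Finset.mem_insert_self _ _)) with
        ⟨k, hk⟩ | ⟨k, hk⟩
      · exact absorbR ⟨k, hk⟩ (lTS4.diaR _ _ _ _ key)
      · exact absorbL ⟨k, by rw [negIter_neg]; exact hk⟩ (lTS4.ndiaL _ _ _ _ key)
  | nnL c Γ Δ a h ih =>
      intro hc Γ' Δ' hL hR
      exact ih hc Γ' Δ'
        (conds_cons (CL_neg.mp (CL_neg.mp (hL _ (Finset.mem_insert_self _ _))))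
          (conds_tail hL)) hR
  | nnR c Γ Δ a h ih =>
      intro hc Γ' Δ' hL hR
      exact ih hc Γ' Δ' hL
        (conds_cons (CL_neg.mp (CL_neg.mp (hR _ (Finset.mem_insert_self _ _))))
          (conds_tail hR))
  | nandL c Γ Δ a b h1 h2 ih1 ih2 =>
      intro hc Γ' Δ' hL hR
      have key1 : lTS4 false Γ' (insert a Δ') :=
        ih1 hc _ _ (conds_weak (Finset.Subset.refl _) (Finset.subset_insert _ _) (conds_tail hL))
          (conds_cons (CL_self (Finset.mem_insert_self _ _))
            (conds_weak (Finset.subset_insert _ _) (Finset.Subset.refl _) hR))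
      have key2 : lTS4 false Γ' (insert b Δ') :=
        ih2 hc _ _ (conds_weak (Finset.Subset.refl _) (Finset.subset_insert _ _) (conds_tail hL))
          (conds_cons (CL_self (Finset.mem_insert_self _ _))
            (conds_weak (Finset.subset_insert _ _) (Finset.Subset.refl _) hR))
      rcases CL_elim (x := Fml.and a b) rfl rfl
          (CL_neg.mp (hL _ (Finset.mem_insert_self _ _))) with ⟨k, hk⟩ | ⟨k, hk⟩
      · exact absorbR ⟨k, hk⟩ (lTS4.andR _ _ _ _ _ key1 key2)
      · exact absorbL ⟨k, by rw [negIter_neg]; exact hk⟩ (lTS4.nandL _ _ _ _ _ key1 key2)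
  | nandR c Γ Δ a b h ih =>
      intro hc Γ' Δ' hL hR
      have key : lTS4 false (insert a (insert b Γ')) Δ' :=
        ih hc _ _ (conds_cons (CL_self (Finset.mem_insert_self _ _))
            (conds_cons (CL_self (Finset.mem_insert_of_mem (Finset.mem_insert_self _ _)))
              (conds_weak sub2 (Finset.Subset.refl _) hL)))
          (conds_weak (Finset.Subset.refl _) sub2 (conds_tail hR))
      rcases CL_elim (x := Fml.and a b) rfl rfl
          (CL_neg.mp (hR _ (Finset.mem_insert_self _ _))) with ⟨k, hk⟩ | ⟨k, hk⟩
      · exact absorbL ⟨k, hk⟩ (lTS4.andL _ _ _ _ _ key)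
      · exact absorbR ⟨k, by rw [negIter_neg]; exact hk⟩ (lTS4.nandR _ _ _ _ _ key)
  | norL c Γ Δ a b h ih =>
      intro hc Γ' Δ' hL hR
      have key : lTS4 false Γ' (insert a (insert b Δ')) :=
        ih hc _ _ (conds_weak (Finset.Subset.refl _) sub2 (conds_tail hL))
          (conds_cons (CL_self (Finset.mem_insert_self _ _))
            (conds_cons (CL_self (Finset.mem_insert_of_mem (Finset.mem_insert_self _ _)))
              (conds_weak sub2 (Finset.Subset.refl _) hR)))
      rcases CL_elim (x := Fml.or a b) rfl rfl
          (CL_neg.mp (hL _ (Finset.mem_insert_self _ _))) with ⟨k, hk⟩ | ⟨k, hk⟩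
      · exact absorbR ⟨k, hk⟩ (lTS4.orR _ _ _ _ _ key)
      · exact absorbL ⟨k, by rw [negIter_neg]; exact hk⟩ (lTS4.norL _ _ _ _ _ key)
  | norR c Γ Δ a b h1 h2 ih1 ih2 =>
      intro hc Γ' Δ' hL hR
      have key1 : lTS4 false (insert a Γ') Δ' :=
        ih1 hc _ _ (conds_cons (CL_self (Finset.mem_insert_self _ _))
            (conds_weak (Finset.subset_insert _ _) (Finset.Subset.refl _) hL))
          (conds_weak (Finset.Subset.refl _) (Finset.subset_insert _ _) (conds_tail hR))
      have key2 : lTS4 false (insert b Γ') Δ' :=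
        ih2 hc _ _ (conds_cons (CL_self (Finset.mem_insert_self _ _))
            (conds_weak (Finset.subset_insert _ _) (Finset.Subset.refl _) hL))
          (conds_weak (Finset.Subset.refl _) (Finset.subset_insert _ _) (conds_tail hR))
      rcases CL_elim (x := Fml.or a b) rfl rfl
          (CL_neg.mp (hR _ (Finset.mem_insert_self _ _))) with ⟨k, hk⟩ | ⟨k, hk⟩
      · exact absorbL ⟨k, hk⟩ (lTS4.orL _ _ _ _ _ key1 key2)
      · exact absorbR ⟨k, by rw [negIter_neg]; exact hk⟩ (lTS4.norR _ _ _ _ _ key1 key2)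
  | nimpL c Γ Δ a b h ih =>
      intro hc Γ' Δ' hL hR
      have key : lTS4 false (insert a Γ') (insert b Δ') :=
        ih hc _ _ (conds_cons (CL_self (Finset.mem_insert_self _ _))
            (conds_weak (Finset.subset_insert _ _) (Finset.subset_insert _ _) (conds_tail hL)))
          (conds_cons (CL_self (Finset.mem_insert_self _ _))
            (conds_weak (Finset.subset_insert _ _) (Finset.subset_insert _ _) hR))
      rcases CL_elim (x := Fml.imp a b) rfl rfl
          (CL_neg.mp (hL _ (Finset.mem_insert_self _ _))) with ⟨k, hk⟩ | ⟨k, hk⟩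
      · exact absorbR ⟨k, hk⟩ (lTS4.impR _ _ _ _ _ key)
      · exact absorbL ⟨k, by rw [negIter_neg]; exact hk⟩ (lTS4.nimpL _ _ _ _ _ key)
  | nimpR c Γ Δ a b h1 h2 ih1 ih2 =>
      intro hc Γ' Δ' hL hR
      have key1 : lTS4 false Γ' (insert a Δ') :=
        ih1 hc _ _ (conds_weak (Finset.Subset.refl _) (Finset.subset_insert _ _) hL)
          (conds_cons (CL_self (Finset.mem_insert_self _ _))
            (conds_weak (Finset.subset_insert _ _) (Finset.Subset.refl _) (conds_tail hR)))
      have key2 : lTS4 false (insert b Γ') Δ' :=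
        ih2 hc _ _ (conds_cons (CL_self (Finset.mem_insert_self _ _))
            (conds_weak (Finset.subset_insert _ _) (Finset.Subset.refl _) hL))
          (conds_weak (Finset.Subset.refl _) (Finset.subset_insert _ _) (conds_tail hR))
      rcases CL_elim (x := Fml.imp a b) rfl rfl
          (CL_neg.mp (hR _ (Finset.mem_insert_self _ _))) with ⟨k, hk⟩ | ⟨k, hk⟩
      · exact absorbL ⟨k, hk⟩ (lTS4.impL _ _ _ _ _ key1 key2)
      · exact absorbR ⟨k, by rw [negIter_neg]; exact hk⟩ (lTS4.nimpR _ _ _ _ _ key1 key2)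
  | nboxR c Γ Δ a h ih =>
      intro hc Γ' Δ' hL hR
      have key : lTS4 false (insert a Γ') Δ' :=
        ih hc _ _ (conds_cons (CL_self (Finset.mem_insert_self _ _))
            (conds_weak (Finset.subset_insert _ _) (Finset.Subset.refl _) hL))
          (conds_weak (Finset.Subset.refl _) (Finset.subset_insert _ _) (conds_tail hR))
      rcases CL_elim (x := Fml.box a) rfl rfl
          (CL_neg.mp (hR _ (Finset.mem_insert_self _ _))) with ⟨k, hk⟩ | ⟨k, hk⟩
      · exact absorbL ⟨k, hk⟩ (lTS4.boxL _ _ _ _ key)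
      · exact absorbR ⟨k, by rw [negIter_neg]; exact hk⟩ (lTS4.nboxR _ _ _ _ key)
  | ndiaL c Γ Δ a h ih =>
      intro hc Γ' Δ' hL hR
      have key : lTS4 false Γ' (insert a Δ') :=
        ih hc _ _ (conds_weak (Finset.Subset.refl _) (Finset.subset_insert _ _) (conds_tail hL))
          (conds_cons (CL_self (Finset.mem_insert_self _ _))
            (conds_weak (Finset.subset_insert _ _) (Finset.Subset.refl _) hR))
      rcases CL_elim (x := Fml.dia a) rfl rfl
          (CL_neg.mp (hL _ (Finset.mem_insert_self _ _))) with ⟨k, hk⟩ | ⟨k, hk⟩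
      · exact absorbR ⟨k, hk⟩ (lTS4.diaR _ _ _ _ key)
      · exact absorbL ⟨k, by rw [negIter_neg]; exact hk⟩ (lTS4.ndiaL _ _ _ _ key)
  | boxR c Γ₁ Γ₂ Δ₁ Δ₂ a h ih =>
      intro hc Γ' Δ' hL hR
      exact modalR (ih hc) hL (conds_tail hR) (hR _ (Finset.mem_insert_self _ _))
  | diaL c Γ₁ Γ₂ Δ₁ Δ₂ a h ih =>
      intro hc Γ' Δ' hL hR
      exact modalL (ih hc) (conds_tail hL) hR (hL _ (Finset.mem_insert_self _ _))
  | nboxL c Γ₁ Γ₂ Δ₁ Δ₂ a h ih =>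
      intro hc Γ' Δ' hL hR
      exact modalR (ih hc) (conds_tail hL) hR (CL_neg.mp (hL _ (Finset.mem_insert_self _ _)))
  | ndiaR c Γ₁ Γ₂ Δ₁ Δ₂ a h ih =>
      intro hc Γ' Δ' hL hR
      exact modalL (ih hc) hL (conds_tail hR) (CL_neg.mp (hR _ (Finset.mem_insert_self _ _)))

/-- (¬left⁻¹) is admissible in cut-free lTS4. -/
theorem stmt5 (Γ Δ : Ctx) (α : Fml) (h : lTS4 false Γ (insert α.neg Δ)) :
    lTS4 false (insert α Γ) Δ := by
  apply main h rfl
  · intro x hx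
    exact CL_self (Finset.mem_insert_of_mem hx)
  · intro x hx
    rcases Finset.mem_insert.1 hx with rfl | hx
    · exact CL_neg.mpr (CL_self (Finset.mem_insert_self _ _))
    · exact CL_self hx
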